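/- Let X be a metric space free of 3-point SRA(α)-subspaces (0 < α < 1) with diam(X) < ∞. Let y₁, y₂ ∈ X with d(y₁,y₂) ≤ (3/10)·diam(X), and let x_j ∈ X satisfy d(x_j, y₁) ≥ (3/10)·diam(X). Then |d(x_j,y₁) − d(x_j,y₂)| ≥ α·d(y₁,y₂). -/
import Mathlib


open Metric Set

/-- A subset `S` of a metric space is free of `k`-point `SRA(β)`-subspaces. -/
def SRAFree {X : Type*} [MetricSpace X] (k : ℕ) (β : ℝ) (S : Set X) : Prop :=
  ∀ Y : Finset X, ↑Y ⊆ S → Y.card = k →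
    ∃ x ∈ Y, ∃ z ∈ Y, ∃ y ∈ Y,
      dist x y > max (dist x z + β * dist z y) (β * dist x z + dist z y)

theorem stmt_7 {X : Type*} [MetricSpace X] (α : ℝ) (hα : 0 < α) (hα1 : α < 1)
    (hbdd : Bornology.IsBounded (univ : Set X))
    (hfree : SRAFree 3 α (univ : Set X))
    (y₁ y₂ xj : X)
    (h1 : dist y₁ y₂ ≤ 3 / 10 * diam (univ : Set X))
    (h2 : dist xj y₁ ≥ 3 / 10 * diam (univ : Set X)) :
    α * dist y₁ y₂ ≤ |dist xj y₁ - dist xj y₂| := by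
  classical
  by_cases h12 : y₁ = y₂
  · subst h12; simp [abs_nonneg]
  by_cases hx1 : xj = y₁
  · -- impossible: dist xj y₁ = 0 but 3/10 diam ≥ dist y₁ y₂ > 0
    subst hx1
    have hd : (0:ℝ) < dist xj y₂ := dist_pos.mpr h12
    have : dist xj xj = 0 := dist_self xj
    rw [le_abs]
    left
    nlinarith
  by_cases hx2 : xj = y₂
  · subst hx2
    have : dist xj xj = 0 := dist_self xj
    rw [le_abs]
    left
    nlinarith [dist_comm y₁ xj, dist_nonneg (x := y₁) (y := xj)]
  -- all three points distinct
  set Y : Finset X := {xj, y₁, y₂} with hY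
  have hcard : Y.card = 3 := by
    rw [hY]
    rw [Finset.card_insert_of_notMem (by simp [hx1, hx2]),
      Finset.card_insert_of_notMem (by simp [h12])]
    rfl
  obtain ⟨x, hx, z, hz, y, hy, hineq⟩ := hfree Y (by simp) hcard
  rw [gt_iff_lt, max_lt_iff] at hineq
  obtain ⟨hA, hB⟩ := hineq
  simp only [hY, Finset.mem_insert, Finset.mem_singleton] at hx hz hy
  rw [le_abs]
  rcases hx with ex | ex | ex <;> rcases hz with ez | ez | ez <;>
    rcases hy with ey | ey | ey <;> rw [ex, ez, ey] at hA hB <;>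
    (try simp only [dist_comm y₁ xj, dist_comm y₂ xj, dist_comm y₂ y₁, dist_self,
      mul_zero, add_zero, zero_add] at hA hB) <;>
    first
    | (left; linarith [mul_nonneg hα.le (dist_nonneg (x := xj) (y := y₁)),
        mul_nonneg hα.le (dist_nonneg (x := xj) (y := y₂)),
        mul_nonneg hα.le (dist_nonneg (x := y₁) (y := y₂)),
        dist_nonneg (x := xj) (y := y₁), dist_nonneg (x := xj) (y := y₂),
        dist_nonneg (x := y₁) (y := y₂)])
    | (right; linarith [mul_nonneg hα.le (dist_nonneg (x := xj) (y := y₁)),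
        mul_nonneg hα.le (dist_nonneg (x := xj) (y := y₂)),
        mul_nonneg hα.le (dist_nonneg (x := y₁) (y := y₂)),
        dist_nonneg (x := xj) (y := y₁), dist_nonneg (x := xj) (y := y₂),
        dist_nonneg (x := y₁) (y := y₂)])
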